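/- Let b > 0 and γ₀ > b, and let u : [0,∞) → ℝ be differentiable with u'(t) = 2u(t)·(b − γ₀ − b·u(t)²) for all t ≥ 0. Then u(t) → 0 as t → ∞. -/

import Mathlib

open Filter

/-- For `0 < b < γ₀`, every solution of the spatially homogeneous velocity equation
`u' = 2u·(b - γ₀ - b·u²)` on `[0,∞)` converges to the disordered state `0` as `t → ∞`. -/
theorem velocity_converges_to_disordered (γ₀ b : ℝ) (hb : 0 < b) (hγ₀ : b < γ₀)
    (u : ℝ → ℝ)
    (hu : ∀ t : ℝ, 0 ≤ t → HasDerivAt u (2 * u t * (b - γ₀ - b * (u t) ^ 2)) t) :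
    Tendsto u atTop (nhds 0) := by
  set c : ℝ := 4 * (γ₀ - b) with hc
  have hcpos : 0 < c := by simp only [hc]; linarith
  set v : ℝ → ℝ := fun t => (u t) ^ 2 with hv
  set w : ℝ → ℝ := fun t => Real.exp (c * t) * v t with hwdef
  have hw : ∀ t, 0 ≤ t → HasDerivAt w (Real.exp (c * t) * (-4 * b * (v t) ^ 2)) t := by
    intro t ht
    have h1 : HasDerivAt v (2 * u t * (2 * u t * (b - γ₀ - b * (u t) ^ 2))) t := by
      simpa [hv, mul_comm, mul_assoc] using (hu t ht).fun_pow 2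
    have h2 : HasDerivAt (fun s => Real.exp (c * s)) (Real.exp (c * t) * c) t := by
      have := (Real.hasDerivAt_exp (c * t)).comp t ((hasDerivAt_id t).const_mul c)
      simpa [Function.comp_def] using this
    have h3 : HasDerivAt w (Real.exp (c * t) * c * v t + Real.exp (c * t) * (2 * u t * (2 * u t * (b - γ₀ - b * u t ^ 2)))) t := h2.fun_mul h1
    convert h3 using 1
    simp only [hv, hc]
    ring
  have hanti : AntitoneOn w (Set.Ici (0 : ℝ)) := by
    apply antitoneOn_of_deriv_nonpos (convex_Ici 0)
    · intro t ht
      exact ((hw t ht).continuousAt).continuousWithinAt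
    · intro t ht
      rw [interior_Ici] at ht
      exact ((hw t (le_of_lt ht)).differentiableAt).differentiableWithinAt
    · intro t ht
      rw [interior_Ici] at ht
      rw [(hw t (le_of_lt ht)).deriv]
      have h1 : (0:ℝ) < Real.exp (c * t) := Real.exp_pos _
      nlinarith [sq_nonneg (v t), h1.le, hb.le, mul_nonneg (mul_nonneg hb.le (sq_nonneg (v t))) h1.le]
  have hbound : ∀ t : ℝ, 0 ≤ t → v t ≤ v 0 * Real.exp (-(c * t)) := by
    intro t ht
    have h := hanti (Set.self_mem_Ici) (Set.mem_Ici.mpr ht) ht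
    simp only [hwdef, mul_zero, Real.exp_zero, one_mul] at h
    have hexp : (0:ℝ) < Real.exp (c * t) := Real.exp_pos _
    rw [Real.exp_neg, mul_comm, ← div_eq_inv_mul]
    exact (le_div_iff₀' hexp).mpr h
  have hv0 : Tendsto v atTop (nhds 0) := by
    have hub : Tendsto (fun t => v 0 * Real.exp (-(c * t))) atTop (nhds 0) := by
      have h0 : Tendsto (fun t : ℝ => c * t) atTop atTop :=
        Tendsto.const_mul_atTop hcpos tendsto_id
      have h1 : Tendsto (fun t : ℝ => -(c * t)) atTop atBot :=
        tendsto_neg_atBot_iff.mpr h0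
      have := Real.tendsto_exp_atBot.comp h1
      simpa using this.const_mul (v 0)
    apply tendsto_of_tendsto_of_tendsto_of_le_of_le' tendsto_const_nhds hub
    · filter_upwards [eventually_ge_atTop (0:ℝ)] with t ht
      exact sq_nonneg (u t)
    · filter_upwards [eventually_ge_atTop (0:ℝ)] with t ht
      exact hbound t ht
  have habs : Tendsto (fun t => |u t|) atTop (nhds 0) := by
    have hsqrt : Tendsto (fun t => Real.sqrt (v t)) atTop (nhds 0) := by
      have := (Real.continuous_sqrt.tendsto 0).comp hv0
      simpa [Function.comp_def] using this
    have : (fun t => Real.sqrt (v t)) = fun t => |u t| := by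
      funext t; simp [hv, Real.sqrt_sq_eq_abs]
    rwa [this] at hsqrt
  exact tendsto_zero_iff_abs_tendsto_zero u |>.mpr habs
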